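/- Let f : ℝⁿ → ℝ be μ-strongly convex, differentiable, and L-smooth with minimizer x*, where 0 < μ ≤ L. Then for any x_0, the iterates x_{k+1} = x_k − (1/L)·∇f(x_k) satisfy f(x_k) − f(x*) ≤ exp(−(μ/L)·k)·L·‖x_0 − x*‖² for all k ≥ 0. -/

import Mathlib

open Set InnerProductSpace

local notation "⟪" x ", " y "⟫" => @inner ℝ _ _ x y

section aux
variable {E : Type*} [NormedAddCommGroup E] [InnerProductSpace ℝ E] [CompleteSpace E]

lemma my_dirDeriv {f : E → ℝ} {f' : E → E} (hgrad : ∀ x, HasGradientAt f (f' x) x)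
    (p d : E) (t : ℝ) :
    HasDerivAt (fun s : ℝ => f (p + s • d)) ⟪f' (p + t • d), d⟫ t := by
  have h1 : HasDerivAt (fun s : ℝ => p + s • d) d t := by
    simpa using ((hasDerivAt_id t).smul_const d).const_add p
  have h2 := (hasGradientAt_iff_hasFDerivAt.mp (hgrad (p + t • d))).comp_hasDerivAt t h1
  exact h2

lemma my_convex_grad {g : E → ℝ} {g' : E → E} (hg : ∀ x, HasGradientAt g (g' x) x)
    (hconv : ConvexOn ℝ univ g) (x y : E) :
    g x + ⟪g' x, y - x⟫ ≤ g y := by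
  set φ : ℝ → ℝ := fun t => g (x + t • (y - x)) with hφ
  have hc : ConvexOn ℝ univ φ := by
    refine ⟨convex_univ, fun t _ s _ a b ha hb hab => ?_⟩
    have key : x + (a • t + b • s) • (y - x) =
        a • (x + t • (y - x)) + b • (x + s • (y - x)) := by
      have hb' : b = 1 - a := by linarith
      subst hb'
      simp only [smul_eq_mul]
      module
    have h := hconv.2 (mem_univ (x + t • (y - x))) (mem_univ (x + s • (y - x))) ha hb hab
    show g (x + (a • t + b • s) • (y - x)) ≤ a • g (x + t • (y - x)) + b • g (x + s • (y - x))
    rw [key]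
    exact h
  have hd : HasDerivAt φ ⟪g' x, y - x⟫ 0 := by
    have := my_dirDeriv hg x (y - x) 0
    simpa using this
  have hs := hc.le_slope_of_hasDerivAt (mem_univ (0:ℝ)) (mem_univ (1:ℝ)) one_pos hd
  have hφ1 : φ 1 = g y := by simp [φ]
  have hφ0 : φ 0 = g x := by simp [φ]
  rw [slope_def_field, hφ1, hφ0] at hs
  simp at hs
  linarith


lemma my_strong_grad {f : E → ℝ} {f' : E → E} (hgrad : ∀ x, HasGradientAt f (f' x) x)
    {μ : ℝ} (hsc : StrongConvexOn univ μ f) (x y : E) :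
    f x + ⟪f' x, y - x⟫ + μ / 2 * ‖y - x‖ ^ 2 ≤ f y := by
  have hconv := strongConvexOn_iff_convex.mp hsc
  have hg : ∀ z, HasGradientAt (fun z => f z - μ / 2 * ‖z‖ ^ 2) (f' z - μ • z) z := by
    intro z
    rw [hasGradientAt_iff_hasFDerivAt]
    have h1 : HasFDerivAt f (toDual ℝ E (f' z)) z := hasGradientAt_iff_hasFDerivAt.mp (hgrad z)
    have h3 : HasFDerivAt (fun w : E => (⟪w, w⟫ : ℝ))
        ((fderivInnerCLM ℝ (z, z)).comp ((ContinuousLinearMap.id ℝ E).prod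
          (ContinuousLinearMap.id ℝ E))) z :=
      (hasFDerivAt_id z).inner ℝ (hasFDerivAt_id z)
    have h4 := h3.const_mul (μ / 2)
    have h5 : HasFDerivAt (fun w : E => μ / 2 * ‖w‖ ^ 2) (toDual ℝ E (μ • z)) z := by
      have heq : (fun w : E => μ / 2 * (⟪w, w⟫ : ℝ)) = fun w : E => μ / 2 * ‖w‖ ^ 2 := by
        funext w; rw [real_inner_self_eq_norm_sq]
      rw [heq] at h4
      refine h4.congr_fderiv ?_
      symm
      ext v
      simp [inner_smul_left, real_inner_comm]
      ring
    have := h1.sub h5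
    refine this.congr_fderiv ?_
    symm
    ext v
    simp [inner_sub_left]
  have h := my_convex_grad hg hconv x y
  have h1 : (⟪f' x - μ • x, y - x⟫ : ℝ) = ⟪f' x, y - x⟫ - μ * (⟪x, y⟫ - ‖x‖ ^ 2) := by
    simp [inner_sub_left, inner_smul_left, inner_sub_right, real_inner_self_eq_norm_sq]
    ring
  have h2 : ‖y - x‖ ^ 2 = ‖y‖ ^ 2 - 2 * (⟪x, y⟫ : ℝ) + ‖x‖ ^ 2 := by
    rw [norm_sub_sq_real, real_inner_comm]
  rw [h1] at h
  rw [h2]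
  ring_nf at h ⊢
  linarith

lemma my_descent {f : E → ℝ} {f' : E → E} (hgrad : ∀ x, HasGradientAt f (f' x) x)
    {L : ℝ} (hL : 0 ≤ L) (hlip : ∀ x y, ‖f' x - f' y‖ ≤ L * ‖x - y‖) (x y : E) :
    f y ≤ f x + ⟪f' x, y - x⟫ + L / 2 * ‖y - x‖ ^ 2 := by
  set d := y - x with hd
  set F : ℝ → ℝ := fun t => f x + t * ⟪f' x, d⟫ + L / 2 * t ^ 2 * ‖d‖ ^ 2 - f (x + t • d)
    with hF
  have hFd : ∀ t : ℝ, HasDerivAt F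
      (⟪f' x, d⟫ + L * t * ‖d‖ ^ 2 - ⟪f' (x + t • d), d⟫) t := by
    intro t
    have h1 := my_dirDeriv hgrad x d t
    have ha : HasDerivAt (fun s : ℝ => s * ⟪f' x, d⟫) ⟪f' x, d⟫ t := by
      simpa using (hasDerivAt_id t).mul_const (⟪f' x, d⟫ : ℝ)
    have hb : HasDerivAt (fun s : ℝ => L / 2 * s ^ 2 * ‖d‖ ^ 2) (L * t * ‖d‖ ^ 2) t := by
      have := ((hasDerivAt_pow 2 t).const_mul (L / 2)).mul_const (‖d‖ ^ 2)
      refine this.congr_deriv ?_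
      ring
    have := (((hasDerivAt_const t (f x)).add ha).add hb).sub h1
    refine this.congr_deriv ?_
    ring
  have hmono : MonotoneOn F (Icc (0:ℝ) 1) := by
    apply monotoneOn_of_deriv_nonneg (convex_Icc 0 1)
    · exact fun t _ => (hFd t).continuousAt.continuousWithinAt
    · exact fun t _ => (hFd t).differentiableAt.differentiableWithinAt
    · intro t ht
      rw [interior_Icc] at ht
      rw [(hFd t).deriv]
      have hli : ‖f' (x + t • d) - f' x‖ ≤ L * (t * ‖d‖) := by
        have := hlip (x + t • d) x
        simpa [norm_smul, abs_of_pos ht.1] using this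
      have hinner := real_inner_le_norm (f' (x + t • d) - f' x) d
      rw [inner_sub_left] at hinner
      nlinarith [norm_nonneg d, norm_nonneg (f' (x + t • d) - f' x), ht.1.le]
  have h01 := hmono (left_mem_Icc.mpr zero_le_one) (right_mem_Icc.mpr zero_le_one) zero_le_one
  have hF0 : F 0 = 0 := by simp [hF]
  have hF1 : F 1 = f x + ⟪f' x, d⟫ + L / 2 * ‖d‖ ^ 2 - f y := by
    simp [hF, hd]
  rw [hF0, hF1] at h01
  linarith

end aux

theorem stmt_19 (n : ℕ) (f : EuclideanSpace ℝ (Fin n) → ℝ)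
    (f' : EuclideanSpace ℝ (Fin n) → EuclideanSpace ℝ (Fin n))
    (hgrad : ∀ x, HasGradientAt f (f' x) x)
    (μ L : ℝ) (hμ : 0 < μ) (hμL : μ ≤ L)
    (hsc : StrongConvexOn Set.univ μ f)
    (hlip : ∀ x y, ‖f' x - f' y‖ ≤ L * ‖x - y‖)
    (xstar : EuclideanSpace ℝ (Fin n)) (hmin : ∀ y, f xstar ≤ f y)
    (x : ℕ → EuclideanSpace ℝ (Fin n))
    (hx : ∀ k, x (k + 1) = x k - (1 / L) • f' (x k)) :
    ∀ k : ℕ, f (x k) - f xstar ≤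
      Real.exp (-(μ / L) * k) * L * ‖x 0 - xstar‖ ^ 2 := by
  have hL : 0 < L := lt_of_lt_of_le hμ hμL
  -- gradient vanishes at the minimizer
  have hstar0 : f' xstar = 0 := by
    have hlm : IsLocalMin f xstar := Filter.Eventually.of_forall hmin
    have h0 := hlm.hasFDerivAt_eq_zero (hasGradientAt_iff_hasFDerivAt.mp (hgrad xstar))
    have h1 : (InnerProductSpace.toDual ℝ _) (f' xstar) =
        (InnerProductSpace.toDual ℝ _) (0 : EuclideanSpace ℝ (Fin n)) := by
      rw [h0, map_zero]
    exact (InnerProductSpace.toDual ℝ _).injective h1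
  -- initial gap bound
  have hinit : f (x 0) - f xstar ≤ L / 2 * ‖x 0 - xstar‖ ^ 2 := by
    have h := my_descent hgrad hL.le hlip xstar (x 0)
    rw [hstar0] at h
    simp at h
    linarith
  -- PL inequality
  have hPL : ∀ z, 2 * μ * (f z - f xstar) ≤ ‖f' z‖ ^ 2 := by
    intro z
    have h := my_strong_grad hgrad hsc z xstar
    have hi : -(‖f' z‖ * ‖xstar - z‖) ≤ (⟪f' z, xstar - z⟫ : ℝ) := by
      have := abs_real_inner_le_norm (f' z) (xstar - z)
      have := abs_le.mp this
      linarith [this.1]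
    nlinarith [sq_nonneg (μ * ‖xstar - z‖ - ‖f' z‖), norm_nonneg (xstar - z), hμ]
  -- one-step contraction
  have hstep : ∀ k, f (x (k + 1)) - f xstar ≤ (1 - μ / L) * (f (x k) - f xstar) := by
    intro k
    have h := my_descent hgrad hL.le hlip (x k) (x (k + 1))
    rw [hx k] at h
    have hsub : x k - (1 / L) • f' (x k) - x k = -((1 / L) • f' (x k)) := by abel
    rw [hsub] at h
    rw [inner_neg_right, inner_smul_right, norm_neg, norm_smul] at h
    rw [real_inner_self_eq_norm_sq] at h
    have hns : (‖(1 : ℝ) / L‖ * ‖f' (x k)‖) ^ 2 = (1 / L) ^ 2 * ‖f' (x k)‖ ^ 2 := by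
      rw [mul_pow, Real.norm_eq_abs, sq_abs]
    rw [hns] at h
    rw [← hx k] at h
    have hpl := hPL (x k)
    have hgap : 0 ≤ f (x k) - f xstar := by linarith [hmin (x k)]
    have hLne : L ≠ 0 := hL.ne'
    have key : f (x (k + 1)) ≤ f (x k) - 1 / (2 * L) * ‖f' (x k)‖ ^ 2 := by
      have : (1 : ℝ) / L * ‖f' (x k)‖ ^ 2 - L / 2 * ((1 / L) ^ 2 * ‖f' (x k)‖ ^ 2)
          = 1 / (2 * L) * ‖f' (x k)‖ ^ 2 := by field_simp; ring
      linarith [h, this]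
    have hmul : 1 / (2 * L) * (2 * μ * (f (x k) - f xstar)) ≤
        1 / (2 * L) * ‖f' (x k)‖ ^ 2 := by
      apply mul_le_mul_of_nonneg_left hpl
      positivity
    have : 1 / (2 * L) * (2 * μ * (f (x k) - f xstar)) = μ / L * (f (x k) - f xstar) := by
      field_simp
    linarith [key, hmul, this.symm.le]
  -- geometric decay by induction
  have hgeo : ∀ k, f (x k) - f xstar ≤ (1 - μ / L) ^ k * (f (x 0) - f xstar) := by
    intro k
    induction k with
    | zero => simp
    | succ k ih =>
      have hfac : 0 ≤ 1 - μ / L := by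
        have : μ / L ≤ 1 := (div_le_one hL).mpr hμL
        linarith
      calc f (x (k + 1)) - f xstar ≤ (1 - μ / L) * (f (x k) - f xstar) := hstep k
        _ ≤ (1 - μ / L) * ((1 - μ / L) ^ k * (f (x 0) - f xstar)) :=
            mul_le_mul_of_nonneg_left ih hfac
        _ = (1 - μ / L) ^ (k + 1) * (f (x 0) - f xstar) := by ring
  intro k
  have hfac : 0 ≤ 1 - μ / L := by
    have : μ / L ≤ 1 := (div_le_one hL).mpr hμL
    linarith
  have hexp : (1 - μ / L) ^ k ≤ Real.exp (-(μ / L) * k) := by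
    have h1 : 1 - μ / L ≤ Real.exp (-(μ / L)) := by
      linarith [Real.add_one_le_exp (-(μ / L))]
    calc (1 - μ / L) ^ k ≤ Real.exp (-(μ / L)) ^ k := pow_le_pow_left₀ hfac h1 k
      _ = Real.exp (-(μ / L) * k) := by
          rw [← Real.exp_nat_mul]; ring_nf
  have hgap0 : 0 ≤ f (x 0) - f xstar := by linarith [hmin (x 0)]
  have hbound : f (x 0) - f xstar ≤ L * ‖x 0 - xstar‖ ^ 2 := by
    nlinarith [hinit, sq_nonneg (‖x 0 - xstar‖), hL]
  calc f (x k) - f xstar ≤ (1 - μ / L) ^ k * (f (x 0) - f xstar) := hgeo k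
    _ ≤ Real.exp (-(μ / L) * k) * (L * ‖x 0 - xstar‖ ^ 2) :=
        mul_le_mul hexp hbound hgap0 (Real.exp_nonneg _)
    _ = Real.exp (-(μ / L) * k) * L * ‖x 0 - xstar‖ ^ 2 := by ring
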